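/- arXiv:2212.06450 — 6 statements merged into one kernel-verified Lean document; each statement's English description precedes it below -/
import Mathlib

section
/- Let 𝒜 be the free ℝ-module with basis {e_σ}_{σ∈Ω} and product defined by e_σ · e_η = Σ_{ζ∈Ω_{ση}} c_{ση,ζ} e_ζ when 𝔇_{ση} is finite (with c_{ση,ζ} > 0 and Σ = 1) and 0 otherwise. Then for every η ∈ Ω, the ideal generated by e_η equals the submodule F^η spanned by {e_σ : σ ∈ E^η}; in particular e_η · 𝒜 = F^η. -/
/-- In the 𝒞-genetic Gibbs algebra (free ℝ-module on {e_σ}_{σ∈Ω} with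
e_σ·e_η = Σ_{ζ∈Ω_{ση}} c_{ση,ζ} e_ζ when 𝔇_{ση} is finite and 0 otherwise),
the ideal e_η·𝒜 equals the fertile ideal F^η = span{e_σ : σ ∈ E^η}. -/
theorem genetic_gibbs_fertile_ideal {S 𝕃 : Type*} [Finite S] [Countable 𝕃]
    (𝒞 : Set (Set 𝕃)) (hpart : Setoid.IsPartition 𝒞)
    (c : (𝕃 → S) → (𝕃 → S) → (𝕃 → S) → ℝ)
    (mul : ((𝕃 → S) →₀ ℝ) →ₗ[ℝ] ((𝕃 → S) →₀ ℝ) →ₗ[ℝ] ((𝕃 → S) →₀ ℝ))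
    (hpos : ∀ σ η ζ : 𝕃 → S, ({x : 𝕃 | σ x ≠ η x}).Finite →
      ζ ∈ {ζ : 𝕃 → S | ∀ Δ ∈ 𝒞, Set.EqOn ζ σ Δ ∨ Set.EqOn ζ η Δ} → 0 < c σ η ζ)
    (hsum : ∀ σ η : 𝕃 → S, ({x : 𝕃 | σ x ≠ η x}).Finite →
      ∑ᶠ ζ ∈ {ζ : 𝕃 → S | ∀ Δ ∈ 𝒞, Set.EqOn ζ σ Δ ∨ Set.EqOn ζ η Δ}, c σ η ζ = 1)
    (hmul : ∀ σ η : 𝕃 → S, ({x : 𝕃 | σ x ≠ η x}).Finite →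
      mul (Finsupp.single σ 1) (Finsupp.single η 1)
        = ∑ᶠ ζ ∈ {ζ : 𝕃 → S | ∀ Δ ∈ 𝒞, Set.EqOn ζ σ Δ ∨ Set.EqOn ζ η Δ},
            c σ η ζ • Finsupp.single ζ (1 : ℝ))
    (hmul0 : ∀ σ η : 𝕃 → S, ¬ ({x : 𝕃 | σ x ≠ η x}).Finite →
      mul (Finsupp.single σ 1) (Finsupp.single η 1) = 0)
    (η : 𝕃 → S) :
    LinearMap.range (mul (Finsupp.single η 1))
      = Submodule.span ℝ {f : (𝕃 → S) →₀ ℝ |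
          ∃ σ : 𝕃 → S, ({x : 𝕃 | σ x ≠ η x}).Finite ∧ f = Finsupp.single σ 1} := by
  classical
  set A := mul (Finsupp.single η 1) with hA
  have hflip : ∀ a b : 𝕃 → S, {x : 𝕃 | a x ≠ b x} = {x : 𝕃 | b x ≠ a x} := by
    intro a b; ext x; exact ne_comm
  -- Ω_{ησ} is finite when 𝔇_{ησ} is
  have hΩfin : ∀ σ : 𝕃 → S, ({x : 𝕃 | η x ≠ σ x}).Finite →
      ({ζ : 𝕃 → S | ∀ Δ ∈ 𝒞, Set.EqOn ζ η Δ ∨ Set.EqOn ζ σ Δ}).Finite := by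
    intro σ hD
    have hsub : {ζ : 𝕃 → S | ∀ Δ ∈ 𝒞, Set.EqOn ζ η Δ ∨ Set.EqOn ζ σ Δ} ⊆
        {ζ : 𝕃 → S | ∀ x ∉ {x : 𝕃 | η x ≠ σ x}, ζ x = η x} := by
      intro ζ hζ x hx
      simp only [Set.mem_setOf_eq, not_not] at hx
      obtain ⟨Δ, ⟨hΔ, hxΔ⟩, -⟩ := hpart.2 x
      rcases hζ Δ hΔ with h | h
      · exact h hxΔ
      · rw [h hxΔ, ← hx]
    refine Set.Finite.subset ?_ hsub
    rw [← Set.finite_coe_iff]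
    have : Finite ({x : 𝕃 | η x ≠ σ x} → S) := by
      have := hD.to_subtype; infer_instance
    refine Finite.of_injective
      (fun ζ : {ζ : 𝕃 → S | ∀ x ∉ {x : 𝕃 | η x ≠ σ x}, ζ x = η x} =>
        (fun x : {x : 𝕃 | η x ≠ σ x} => (ζ : 𝕃 → S) x)) ?_
    rintro ⟨ζ₁, h₁⟩ ⟨ζ₂, h₂⟩ h
    ext x
    show ζ₁ x = ζ₂ x
    by_cases hx : x ∈ {x : 𝕃 | η x ≠ σ x}
    · exact congrFun h ⟨x, hx⟩
    · rw [h₁ x hx, h₂ x hx]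
  -- members of Ω_{ησ} are at least as close to η as σ is
  have hdsub : ∀ σ ζ : 𝕃 → S,
      ζ ∈ {ζ : 𝕃 → S | ∀ Δ ∈ 𝒞, Set.EqOn ζ η Δ ∨ Set.EqOn ζ σ Δ} →
      {x : 𝕃 | η x ≠ ζ x} ⊆ {x : 𝕃 | η x ≠ σ x} := by
    intro σ ζ hζ x hx
    simp only [Set.mem_setOf_eq] at hx ⊢
    obtain ⟨Δ, ⟨hΔ, hxΔ⟩, -⟩ := hpart.2 x
    rcases hζ Δ hΔ with h | h
    · exact absurd (h hxΔ).symm hx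
    · intro e; exact hx (by rw [h hxΔ, ← e])
  -- each e_σ with σ fertile is in the range of A (induction on |𝔇_{ησ}|)
  have hstep : ∀ n : ℕ, ∀ σ : 𝕃 → S, ∀ hf : ({x : 𝕃 | η x ≠ σ x}).Finite,
      hf.toFinset.card = n → Finsupp.single σ (1 : ℝ) ∈ LinearMap.range A := by
    intro n
    induction n using Nat.strong_induction_on with
    | _ n ih =>
      intro σ hf hcard
      have hσΩ : σ ∈ {ζ : 𝕃 → S | ∀ Δ ∈ 𝒞, Set.EqOn ζ η Δ ∨ Set.EqOn ζ σ Δ} :=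
        fun Δ _ => Or.inr (fun x _ => rfl)
      set t : Finset (𝕃 → S) := (hΩfin σ hf).toFinset with ht
      have hmem : σ ∈ t := by rw [ht, Set.Finite.mem_toFinset]; exact hσΩ
      have hAe : A (Finsupp.single σ 1)
          = ∑ ζ ∈ t, c η σ ζ • Finsupp.single ζ (1 : ℝ) := by
        rw [hA, hmul η σ hf, ← (hΩfin σ hf).coe_toFinset, finsum_mem_coe_finset]
      have hsplit : c η σ σ • Finsupp.single σ (1 : ℝ)
          = A (Finsupp.single σ 1)
            - ∑ ζ ∈ t.erase σ, c η σ ζ • Finsupp.single ζ (1 : ℝ) := by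
        rw [hAe, ← Finset.add_sum_erase t _ hmem, add_sub_cancel_right]
      have hcpos : 0 < c η σ σ := hpos η σ σ hf hσΩ
      have hmemrange : ∀ ζ ∈ t.erase σ,
          Finsupp.single ζ (1 : ℝ) ∈ LinearMap.range A := by
        intro ζ hζ
        have hζne : ζ ≠ σ := (Finset.mem_erase.mp hζ).1
        have hζΩ : ζ ∈ {ζ : 𝕃 → S | ∀ Δ ∈ 𝒞, Set.EqOn ζ η Δ ∨ Set.EqOn ζ σ Δ} := by
          have := (Finset.mem_erase.mp hζ).2
          rwa [ht, Set.Finite.mem_toFinset] at this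
        have hsubζ : {x : 𝕃 | η x ≠ ζ x} ⊆ {x : 𝕃 | η x ≠ σ x} := hdsub σ ζ hζΩ
        have hfζ : ({x : 𝕃 | η x ≠ ζ x}).Finite := hf.subset hsubζ
        obtain ⟨x₀, hx₀⟩ := Function.ne_iff.mp hζne
        obtain ⟨Δ, ⟨hΔ, hxΔ⟩, -⟩ := hpart.2 x₀
        have hx₀η : ζ x₀ = η x₀ := by
          rcases hζΩ Δ hΔ with h | h
          · exact h hxΔ
          · exact absurd (h hxΔ) hx₀
        have hx₀mem : x₀ ∈ hf.toFinset := by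
          rw [Set.Finite.mem_toFinset]
          simp only [Set.mem_setOf_eq]
          intro e; exact hx₀ (by rw [hx₀η, ← e])
        have hx₀not : x₀ ∉ hfζ.toFinset := by
          rw [Set.Finite.mem_toFinset]
          simp only [Set.mem_setOf_eq, not_not]
          exact hx₀η.symm
        have hss : hfζ.toFinset ⊂ hf.toFinset := by
          refine (Finset.ssubset_iff_of_subset ?_).mpr ⟨x₀, hx₀mem, hx₀not⟩
          exact Set.Finite.toFinset_subset_toFinset.mpr hsubζ
        have hlt : hfζ.toFinset.card < n := hcard ▸ Finset.card_lt_card hss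
        exact ih _ hlt ζ hfζ rfl
      have h2 : Finsupp.single σ (1 : ℝ)
          = (c η σ σ)⁻¹ • (A (Finsupp.single σ 1)
              - ∑ ζ ∈ t.erase σ, c η σ ζ • Finsupp.single ζ (1 : ℝ)) := by
        rw [← hsplit, smul_smul, inv_mul_cancel₀ hcpos.ne', one_smul]
      rw [h2]
      exact Submodule.smul_mem _ _ (Submodule.sub_mem _ ⟨_, rfl⟩
        (Submodule.sum_mem _ fun ζ hζ => Submodule.smul_mem _ _ (hmemrange ζ hζ)))
  apply le_antisymm
  · rintro x ⟨f, rfl⟩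
    induction f using Finsupp.induction_linear with
    | zero => rw [map_zero]; exact Submodule.zero_mem _
    | add f g hf hg => rw [map_add]; exact Submodule.add_mem _ hf hg
    | single a b =>
      have hb : Finsupp.single a b = b • Finsupp.single a (1 : ℝ) := by
        rw [Finsupp.smul_single, smul_eq_mul, mul_one]
      rw [hb, map_smul]
      refine Submodule.smul_mem _ _ ?_
      by_cases hfin : ({x : 𝕃 | η x ≠ a x}).Finite
      · rw [hA, hmul η a hfin, ← (hΩfin a hfin).coe_toFinset, finsum_mem_coe_finset]
        refine Submodule.sum_mem _ fun ζ hζ => Submodule.smul_mem _ _ ?_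
        have hζΩ : ζ ∈ {ζ : 𝕃 → S | ∀ Δ ∈ 𝒞, Set.EqOn ζ η Δ ∨ Set.EqOn ζ a Δ} := by
          rwa [Set.Finite.mem_toFinset] at hζ
        refine Submodule.subset_span ⟨ζ, ?_, rfl⟩
        rw [hflip ζ η]
        exact hfin.subset (hdsub a ζ hζΩ)
      · rw [hA, hmul0 η a hfin]
        exact Submodule.zero_mem _
  · rw [Submodule.span_le]
    rintro f ⟨σ, hσ, rfl⟩
    have hσ' : ({x : 𝕃 | η x ≠ σ x}).Finite := by rw [hflip η σ]; exact hσ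
    exact hstep _ σ hσ' rfl
end

section
/- Every nonzero multiplicative linear functional φ : 𝒜 → ℝ of the 𝒞-genetic Gibbs algebra satisfies: φ(e_σ) ∈ {0,1} for every σ, and the set {σ : φ(e_σ) = 1} is exactly one fertile class E^η. Consequently hom(𝒜, ℝ) = {π_F : F ∈ ℱ_Ω ∪ {0}} where π_{F^η}(e_σ) = 1 if σ ∈ E^η and 0 otherwise. -/
/-- Every nonzero multiplicative linear functional φ : 𝒜 → ℝ of the
𝒞-genetic Gibbs algebra takes values in {0,1} on the basis, and the set
where it is 1 is exactly one fertile class E^η. -/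
theorem genetic_gibbs_multiplicative_functionals {S 𝕃 : Type*} [Finite S] [Countable 𝕃]
    (𝒞 : Set (Set 𝕃)) (hpart : Setoid.IsPartition 𝒞)
    (c : (𝕃 → S) → (𝕃 → S) → (𝕃 → S) → ℝ)
    (mul : ((𝕃 → S) →₀ ℝ) →ₗ[ℝ] ((𝕃 → S) →₀ ℝ) →ₗ[ℝ] ((𝕃 → S) →₀ ℝ))
    (hpos : ∀ σ η ζ : 𝕃 → S, ({x : 𝕃 | σ x ≠ η x}).Finite →
      ζ ∈ {ζ : 𝕃 → S | ∀ Δ ∈ 𝒞, Set.EqOn ζ σ Δ ∨ Set.EqOn ζ η Δ} → 0 < c σ η ζ)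
    (hsum : ∀ σ η : 𝕃 → S, ({x : 𝕃 | σ x ≠ η x}).Finite →
      ∑ᶠ ζ ∈ {ζ : 𝕃 → S | ∀ Δ ∈ 𝒞, Set.EqOn ζ σ Δ ∨ Set.EqOn ζ η Δ}, c σ η ζ = 1)
    (hmul : ∀ σ η : 𝕃 → S, ({x : 𝕃 | σ x ≠ η x}).Finite →
      mul (Finsupp.single σ 1) (Finsupp.single η 1)
        = ∑ᶠ ζ ∈ {ζ : 𝕃 → S | ∀ Δ ∈ 𝒞, Set.EqOn ζ σ Δ ∨ Set.EqOn ζ η Δ},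
            c σ η ζ • Finsupp.single ζ (1 : ℝ))
    (hmul0 : ∀ σ η : 𝕃 → S, ¬ ({x : 𝕃 | σ x ≠ η x}).Finite →
      mul (Finsupp.single σ 1) (Finsupp.single η 1) = 0)
    (hidem : ∀ σ : 𝕃 → S,
      mul (Finsupp.single σ 1) (Finsupp.single σ 1) = Finsupp.single σ 1)
    (φ : ((𝕃 → S) →₀ ℝ) →ₗ[ℝ] ℝ)
    (hφmul : ∀ u v, φ (mul u v) = φ u * φ v) (hφ0 : φ ≠ 0) :
    (∀ σ : 𝕃 → S, φ (Finsupp.single σ 1) = 0 ∨ φ (Finsupp.single σ 1) = 1) ∧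
      ∃ η : 𝕃 → S, {σ : 𝕃 → S | φ (Finsupp.single σ 1) = 1}
        = {σ : 𝕃 → S | ({x : 𝕃 | σ x ≠ η x}).Finite} := by
  classical
  -- values are 0 or 1
  have h01 : ∀ σ : 𝕃 → S, φ (Finsupp.single σ 1) = 0 ∨ φ (Finsupp.single σ 1) = 1 := by
    intro σ
    have h := hφmul (Finsupp.single σ 1) (Finsupp.single σ 1)
    rw [hidem σ] at h
    have : φ (Finsupp.single σ 1) * (φ (Finsupp.single σ 1) - 1) = 0 := by ring_nf; linarith
    rcases mul_eq_zero.mp this with h' | h'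
    · exact Or.inl h'
    · exact Or.inr (by linarith)
  -- the Ω sets are finite
  have hfin : ∀ σ η : 𝕃 → S, ({x : 𝕃 | σ x ≠ η x}).Finite →
      ({ζ : 𝕃 → S | ∀ Δ ∈ 𝒞, Set.EqOn ζ σ Δ ∨ Set.EqOn ζ η Δ}).Finite := by
    intro σ η hD
    set D := {x : 𝕃 | σ x ≠ η x} with hDdef
    have : Finite ↥D := hD.to_subtype
    have hout : ∀ ζ ∈ {ζ : 𝕃 → S | ∀ Δ ∈ 𝒞, Set.EqOn ζ σ Δ ∨ Set.EqOn ζ η Δ},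
        ∀ x : 𝕃, x ∉ D → ζ x = σ x := by
      intro ζ hζ x hx
      obtain ⟨Δ, ⟨hΔ𝒞, hxΔ⟩, _⟩ := hpart.2 x
      rcases hζ Δ hΔ𝒞 with h | h
      · exact h hxΔ
      · have : ¬ σ x ≠ η x := hx
        push_neg at this
        rw [h hxΔ, this]
    rw [← Set.finite_coe_iff]
    refine Finite.of_injective
      (fun ζ : ↥{ζ : 𝕃 → S | ∀ Δ ∈ 𝒞, Set.EqOn ζ σ Δ ∨ Set.EqOn ζ η Δ} =>
        (fun x : ↥D => ζ.1 x.1)) ?_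
    intro ζ₁ ζ₂ h
    ext x
    by_cases hx : x ∈ D
    · exact congrFun h ⟨x, hx⟩
    · rw [hout ζ₁.1 ζ₁.2 x hx, hout ζ₂.1 ζ₂.2 x hx]
  -- key multiplication identity
  have key : ∀ (σ η : 𝕃 → S) (h : ({x : 𝕃 | σ x ≠ η x}).Finite),
      φ (Finsupp.single σ 1) * φ (Finsupp.single η 1)
        = ∑ ζ ∈ (hfin σ η h).toFinset, c σ η ζ * φ (Finsupp.single ζ 1) := by
    intro σ η h
    rw [← hφmul, hmul σ η h,
      finsum_mem_eq_finite_toFinset_sum _ (hfin σ η h), map_sum]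
    exact Finset.sum_congr rfl fun ζ _ => by rw [map_smul, smul_eq_mul]
  -- if φ(e_η) = 1 and σ ∈ E^η then φ(e_σ) = 1
  have step : ∀ σ η : 𝕃 → S, ({x : 𝕃 | σ x ≠ η x}).Finite →
      φ (Finsupp.single η 1) = 1 → φ (Finsupp.single σ 1) = 1 := by
    intro σ η h hη
    rcases h01 σ with h0 | h1
    · exfalso
      have hk := key σ η h
      rw [h0, hη, zero_mul] at hk
      have hηmem : η ∈ (hfin σ η h).toFinset := by
        rw [Set.Finite.mem_toFinset]
        intro Δ _
        exact Or.inr (fun x _ => rfl)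
      have hnn : ∀ ζ ∈ (hfin σ η h).toFinset, 0 ≤ c σ η ζ * φ (Finsupp.single ζ 1) := by
        intro ζ hζ
        rw [Set.Finite.mem_toFinset] at hζ
        have hc := hpos σ η ζ h hζ
        rcases h01 ζ with h' | h' <;> rw [h'] <;> positivity
      have := (Finset.sum_eq_zero_iff_of_nonneg hnn).mp hk.symm η hηmem
      rw [hη, mul_one] at this
      exact absurd this (ne_of_gt (hpos σ η η h (fun Δ _ => Or.inr (fun x _ => rfl))))
    · exact h1
  refine ⟨h01, ?_⟩
  -- find η with φ(e_η) = 1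
  have : ∃ η : 𝕃 → S, φ (Finsupp.single η 1) = 1 := by
    by_contra hno
    push_neg at hno
    apply hφ0
    apply Finsupp.lhom_ext
    intro a b
    have h0 : φ (Finsupp.single a 1) = 0 := by
      rcases h01 a with h | h
      · exact h
      · exact absurd h (hno a)
    have : (Finsupp.single a b : (𝕃 → S) →₀ ℝ) = b • Finsupp.single a 1 := by
      rw [Finsupp.smul_single, smul_eq_mul, mul_one]
    rw [this, map_smul, h0, smul_zero, LinearMap.zero_apply]
  obtain ⟨η, hη⟩ := this
  refine ⟨η, Set.ext fun σ => ⟨?_, ?_⟩⟩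
  · intro hσ
    by_contra hinf
    have h := hφmul (Finsupp.single σ 1) (Finsupp.single η 1)
    rw [hmul0 σ η hinf, map_zero, hσ, hη, mul_one] at h
    exact one_ne_zero h.symm
  · intro hσ
    exact step σ η hσ hη
end

section
/- Let φ : 𝒜 → ℝ be multiplicative and linear with φ(e_η) = 1 for some η. If ζ ∈ E^η (i.e. 𝔇_{ζη} finite), then φ(e_ζ) = 1. -/
/-- If φ is a multiplicative linear functional of the 𝒞-genetic Gibbs algebra
with φ(e_η) = 1 and ζ ∈ E^η (i.e. 𝔇_{ζη} finite), then φ(e_ζ) = 1. -/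
theorem functional_constant_on_fertile_class {S 𝕃 : Type*} [Finite S] [Countable 𝕃]
    (𝒞 : Set (Set 𝕃)) (hpart : Setoid.IsPartition 𝒞)
    (c : (𝕃 → S) → (𝕃 → S) → (𝕃 → S) → ℝ)
    (mul : ((𝕃 → S) →₀ ℝ) →ₗ[ℝ] ((𝕃 → S) →₀ ℝ) →ₗ[ℝ] ((𝕃 → S) →₀ ℝ))
    (hpos : ∀ σ η ζ : 𝕃 → S, ({x : 𝕃 | σ x ≠ η x}).Finite →
      ζ ∈ {ζ : 𝕃 → S | ∀ Δ ∈ 𝒞, Set.EqOn ζ σ Δ ∨ Set.EqOn ζ η Δ} → 0 < c σ η ζ)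
    (hsum : ∀ σ η : 𝕃 → S, ({x : 𝕃 | σ x ≠ η x}).Finite →
      ∑ᶠ ζ ∈ {ζ : 𝕃 → S | ∀ Δ ∈ 𝒞, Set.EqOn ζ σ Δ ∨ Set.EqOn ζ η Δ}, c σ η ζ = 1)
    (hmul : ∀ σ η : 𝕃 → S, ({x : 𝕃 | σ x ≠ η x}).Finite →
      mul (Finsupp.single σ 1) (Finsupp.single η 1)
        = ∑ᶠ ζ ∈ {ζ : 𝕃 → S | ∀ Δ ∈ 𝒞, Set.EqOn ζ σ Δ ∨ Set.EqOn ζ η Δ},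
            c σ η ζ • Finsupp.single ζ (1 : ℝ))
    (hidem : ∀ σ : 𝕃 → S,
      mul (Finsupp.single σ 1) (Finsupp.single σ 1) = Finsupp.single σ 1)
    (φ : ((𝕃 → S) →₀ ℝ) →ₗ[ℝ] ℝ)
    (hφmul : ∀ u v, φ (mul u v) = φ u * φ v)
    (η ζ : 𝕃 → S) (hη : φ (Finsupp.single η 1) = 1)
    (hfin : ({x : 𝕃 | ζ x ≠ η x}).Finite) :
    φ (Finsupp.single ζ 1) = 1 := by
  classical
  set Ω : Set (𝕃 → S) := {ξ : 𝕃 → S | ∀ Δ ∈ 𝒞, Set.EqOn ξ ζ Δ ∨ Set.EqOn ξ η Δ} with hΩ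
  have hηΩ : η ∈ Ω := fun Δ _ => Or.inr fun x _ => rfl
  have hidemφ : ∀ σ : 𝕃 → S,
      φ (Finsupp.single σ 1) = 0 ∨ φ (Finsupp.single σ 1) = 1 := by
    intro σ
    have h := hφmul (Finsupp.single σ 1) (Finsupp.single σ 1)
    rw [hidem] at h
    have h2 : φ (Finsupp.single σ 1) * (φ (Finsupp.single σ 1) - 1) = 0 := by nlinarith
    rcases mul_eq_zero.mp h2 with h3 | h3
    · exact Or.inl h3
    · exact Or.inr (by linarith)
  have hsum1 := hsum ζ η hfin
  have hΩfin : Ω.Finite := by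
    by_contra hinf
    have hΩsub : Ω ⊆ Function.support (c ζ η) := fun ξ hξ =>
      (hpos ζ η ξ hfin hξ).ne'
    have hsupp : (Ω ∩ Function.support (c ζ η)).Infinite := by
      have : Ω ∩ Function.support (c ζ η) = Ω := Set.inter_eq_self_of_subset_left hΩsub
      rw [this]; exact hinf
    rw [finsum_mem_eq_zero_of_infinite hsupp] at hsum1
    norm_num at hsum1
  have hsumF : ∑ ξ ∈ hΩfin.toFinset, c ζ η ξ = 1 := by
    rw [← finsum_mem_eq_finite_toFinset_sum _ hΩfin]; exact hsum1
  have hmulF : mul (Finsupp.single ζ 1) (Finsupp.single η 1)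
      = ∑ ξ ∈ hΩfin.toFinset, c ζ η ξ • Finsupp.single ξ (1 : ℝ) := by
    rw [hmul ζ η hfin, ← finsum_mem_eq_finite_toFinset_sum _ hΩfin]
  have key : φ (Finsupp.single ζ 1)
      = ∑ ξ ∈ hΩfin.toFinset, c ζ η ξ * φ (Finsupp.single ξ 1) := by
    have := hφmul (Finsupp.single ζ 1) (Finsupp.single η 1)
    rw [hmulF, hη, mul_one, map_sum] at this
    simp only [map_smul, smul_eq_mul] at this
    exact this.symm
  have hterm_nonneg : ∀ ξ ∈ hΩfin.toFinset, 0 ≤ c ζ η ξ * φ (Finsupp.single ξ 1) := by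
    intro ξ hξ
    have hξΩ : ξ ∈ Ω := hΩfin.mem_toFinset.mp hξ
    have hc := hpos ζ η ξ hfin hξΩ
    rcases hidemφ ξ with h | h <;> rw [h] <;> positivity
  have hlb : c ζ η η * φ (Finsupp.single η 1)
      ≤ ∑ ξ ∈ hΩfin.toFinset, c ζ η ξ * φ (Finsupp.single ξ 1) :=
    Finset.single_le_sum hterm_nonneg (hΩfin.mem_toFinset.mpr hηΩ)
  have hcη := hpos ζ η η hfin hηΩ
  have hpos' : 0 < φ (Finsupp.single ζ 1) := by
    rw [key]; rw [hη, mul_one] at hlb; linarith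
  rcases hidemφ ζ with h | h
  · rw [h] at hpos'; exact absurd hpos' (lt_irrefl 0)
  · exact h
end

section
/- In the 𝒞-evolution Gibbs algebra ℰ with basis {e_{ση}}_{(σ,η)∈Ω²} and product e_{ση}² = Σ_{(ζ,ξ)∈Ω_{ση}²} c_{ση,ζ}c_{ση,ξ} e_{ζξ} (and distinct basis elements multiplying to zero), an element u is idempotent if and only if u is a finite sum of distinct diagonal basis elements e_{σσ}. -/
set_option linter.unusedSectionVars false
set_option maxHeartbeats 1000000

section EvolutionGibbs

variable {S 𝕃 : Type*} [Finite S]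

private lemma mem_pair_of_omega {𝒞 : Set (Set 𝕃)} (hpart : Setoid.IsPartition 𝒞)
    {σ η ζ : 𝕃 → S} (hζ : ∀ Δ ∈ 𝒞, Set.EqOn ζ σ Δ ∨ Set.EqOn ζ η Δ) (x : 𝕃) :
    ζ x = σ x ∨ ζ x = η x := by
  obtain ⟨Δ, ⟨hΔ, hx⟩, -⟩ := hpart.2 x
  rcases hζ Δ hΔ with h | h
  · exact Or.inl (h hx)
  · exact Or.inr (h hx)

private lemma omega_diag {𝒞 : Set (Set 𝕃)} (hpart : Setoid.IsPartition 𝒞) (σ : 𝕃 → S) :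
    {ζ : 𝕃 → S | ∀ Δ ∈ 𝒞, Set.EqOn ζ σ Δ ∨ Set.EqOn ζ σ Δ} = {σ} := by
  ext ζ
  simp only [Set.mem_setOf_eq, Set.mem_singleton_iff]
  constructor
  · intro h
    funext x
    rcases mem_pair_of_omega hpart h x with h' | h' <;> exact h'
  · rintro rfl
    exact fun Δ _ => Or.inl fun x _ => rfl

private lemma omega_diff_subset {𝒞 : Set (Set 𝕃)} (hpart : Setoid.IsPartition 𝒞)
    {σ η ζ ξ : 𝕃 → S}
    (hζ : ∀ Δ ∈ 𝒞, Set.EqOn ζ σ Δ ∨ Set.EqOn ζ η Δ)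
    (hξ : ∀ Δ ∈ 𝒞, Set.EqOn ξ σ Δ ∨ Set.EqOn ξ η Δ) :
    {x : 𝕃 | ζ x ≠ ξ x} ⊆ {x : 𝕃 | σ x ≠ η x} := by
  intro x hx
  simp only [Set.mem_setOf_eq] at hx ⊢
  intro hse
  apply hx
  rcases mem_pair_of_omega hpart hζ x with h1 | h1 <;>
    rcases mem_pair_of_omega hpart hξ x with h2 | h2 <;>
      rw [h1, h2] <;> first | rfl | exact hse | exact hse.symm

private lemma omega_finite {𝒞 : Set (Set 𝕃)} (hpart : Setoid.IsPartition 𝒞)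
    {σ η : 𝕃 → S} (hD : ({x : 𝕃 | σ x ≠ η x}).Finite) :
    ({ζ : 𝕃 → S | ∀ Δ ∈ 𝒞, Set.EqOn ζ σ Δ ∨ Set.EqOn ζ η Δ}).Finite := by
  classical
  haveI : Finite ({x : 𝕃 | σ x ≠ η x} : Set 𝕃) := hD
  apply Set.Finite.of_finite_image
    (f := fun ζ : 𝕃 → S => fun x : {x : 𝕃 | σ x ≠ η x} => ζ x)
  · exact Set.toFinite _
  · intro ζ hζ ξ hξ h
    funext x
    by_cases hx : σ x = η x
    · rcases mem_pair_of_omega hpart hζ x with h1 | h1 <;>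
        rcases mem_pair_of_omega hpart hξ x with h2 | h2 <;>
          rw [h1, h2] <;> first | rfl | exact hx | exact hx.symm
    · exact congrFun h ⟨x, hx⟩

end EvolutionGibbs

/-- In the 𝒞-evolution Gibbs algebra ℰ, an element u is idempotent iff u is a
finite sum of distinct diagonal basis elements e_{σσ}. -/
theorem evolution_gibbs_idempotents {S 𝕃 : Type*} [Finite S] [Countable 𝕃]
    (𝒞 : Set (Set 𝕃)) (hpart : Setoid.IsPartition 𝒞)
    (c : (𝕃 → S) → (𝕃 → S) → (𝕃 → S) → ℝ)
    (mul : (((𝕃 → S) × (𝕃 → S)) →₀ ℝ) →ₗ[ℝ]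
      (((𝕃 → S) × (𝕃 → S)) →₀ ℝ) →ₗ[ℝ] (((𝕃 → S) × (𝕃 → S)) →₀ ℝ))
    (hpos : ∀ σ η ζ : 𝕃 → S, ({x : 𝕃 | σ x ≠ η x}).Finite →
      ζ ∈ {ζ : 𝕃 → S | ∀ Δ ∈ 𝒞, Set.EqOn ζ σ Δ ∨ Set.EqOn ζ η Δ} → 0 < c σ η ζ)
    (hsum : ∀ σ η : 𝕃 → S, ({x : 𝕃 | σ x ≠ η x}).Finite →
      ∑ᶠ ζ ∈ {ζ : 𝕃 → S | ∀ Δ ∈ 𝒞, Set.EqOn ζ σ Δ ∨ Set.EqOn ζ η Δ}, c σ η ζ = 1)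
    (hmul : ∀ σ η : 𝕃 → S, ({x : 𝕃 | σ x ≠ η x}).Finite →
      mul (Finsupp.single (σ, η) 1) (Finsupp.single (σ, η) 1)
        = ∑ᶠ q ∈ ({ζ : 𝕃 → S | ∀ Δ ∈ 𝒞, Set.EqOn ζ σ Δ ∨ Set.EqOn ζ η Δ} ×ˢ
              {ζ : 𝕃 → S | ∀ Δ ∈ 𝒞, Set.EqOn ζ σ Δ ∨ Set.EqOn ζ η Δ}),
            (c σ η q.1 * c σ η q.2) • Finsupp.single q (1 : ℝ))
    (hmul0 : ∀ σ η : 𝕃 → S, ¬ ({x : 𝕃 | σ x ≠ η x}).Finite →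
      mul (Finsupp.single (σ, η) 1) (Finsupp.single (σ, η) 1) = 0)
    (horth : ∀ p q : (𝕃 → S) × (𝕃 → S), p ≠ q →
      mul (Finsupp.single p 1) (Finsupp.single q 1) = 0)
    (u : ((𝕃 → S) × (𝕃 → S)) →₀ ℝ) :
    mul u u = u ↔
      ∃ F : Finset (𝕃 → S), u = ∑ σ ∈ F, Finsupp.single (σ, σ) (1 : ℝ) := by
  classical
  set E : ((𝕃 → S) × (𝕃 → S)) → (((𝕃 → S) × (𝕃 → S)) →₀ ℝ) :=
    fun p => mul (Finsupp.single p 1) (Finsupp.single p 1) with hEdef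
  -- diagonal squares
  have hEdiag : ∀ σ : 𝕃 → S, E (σ, σ) = Finsupp.single (σ, σ) (1 : ℝ) := by
    intro σ
    have hD : ({x : 𝕃 | σ x ≠ σ x}).Finite := by simp
    have hΩ := omega_diag hpart σ
    have h2 := hsum σ σ hD
    rw [hΩ, finsum_mem_singleton] at h2
    have h1 := hmul σ σ hD
    rw [hΩ] at h1
    have hss : (({σ} : Set (𝕃 → S)) ×ˢ ({σ} : Set (𝕃 → S)))
        = {((σ, σ) : (𝕃 → S) × (𝕃 → S))} := by
      ext q; simp [Set.mem_prod, Prod.ext_iff]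
    rw [hss, finsum_mem_singleton, h2] at h1
    simp only [hEdef]
    simpa using h1
  have hEdiag' : ∀ p : (𝕃 → S) × (𝕃 → S), p.1 = p.2 →
      E p = Finsupp.single p (1 : ℝ) := by
    rintro ⟨a, b⟩ h
    have h' : a = b := h
    subst h'
    exact hEdiag a
  -- off-diagonal finite squares, coefficientwise
  have hEcoef : ∀ p : (𝕃 → S) × (𝕃 → S), ({x : 𝕃 | p.1 x ≠ p.2 x}).Finite →
      ∀ q : (𝕃 → S) × (𝕃 → S),
      E p q = if (∀ Δ ∈ 𝒞, Set.EqOn q.1 p.1 Δ ∨ Set.EqOn q.1 p.2 Δ) ∧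
                 (∀ Δ ∈ 𝒞, Set.EqOn q.2 p.1 Δ ∨ Set.EqOn q.2 p.2 Δ)
              then c p.1 p.2 q.1 * c p.1 p.2 q.2 else 0 := by
    intro p hD q
    have hfin := omega_finite hpart (σ := p.1) (η := p.2) hD
    have h1 := hmul p.1 p.2 hD
    rw [finsum_mem_eq_finite_toFinset_sum _ (hfin.prod hfin)] at h1
    have h2 : E p = ∑ r ∈ (hfin.prod hfin).toFinset,
        (c p.1 p.2 r.1 * c p.1 p.2 r.2) • Finsupp.single r (1 : ℝ) := by
      rw [hEdef]; exact h1
    rw [h2, Finsupp.finset_sum_apply]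
    have h3 : ∀ r ∈ (hfin.prod hfin).toFinset,
        ((c p.1 p.2 r.1 * c p.1 p.2 r.2) • Finsupp.single r (1 : ℝ)) q =
          if r = q then c p.1 p.2 r.1 * c p.1 p.2 r.2 else 0 := by
      intro r _
      rw [Finsupp.smul_apply, Finsupp.single_apply]
      split <;> simp
    rw [Finset.sum_congr rfl h3, Finset.sum_ite_eq' _ q _]
    simp only [Set.Finite.mem_toFinset, Set.mem_prod, Set.mem_setOf_eq]
  have hE0 : ∀ p : (𝕃 → S) × (𝕃 → S), ¬ ({x : 𝕃 | p.1 x ≠ p.2 x}).Finite →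
      E p = 0 := by
    intro p hD
    rw [hEdef]
    exact hmul0 p.1 p.2 hD
  -- nonnegativity of coefficients of squares
  have hEnn : ∀ p q : (𝕃 → S) × (𝕃 → S), 0 ≤ E p q := by
    intro p q
    by_cases hd : p.1 = p.2
    · rw [hEdiag' p hd, Finsupp.single_apply]
      split <;> norm_num
    · by_cases hD : ({x : 𝕃 | p.1 x ≠ p.2 x}).Finite
      · rw [hEcoef p hD q]
        split
        · next hmem =>
          exact le_of_lt (mul_pos (hpos p.1 p.2 q.1 hD hmem.1) (hpos p.1 p.2 q.2 hD hmem.2))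
        · exact le_refl 0
      · rw [hE0 p hD]; simp
  constructor
  · intro hidem
    -- expansion of u and of mul u u
    have hu' : u = ∑ p ∈ u.support, (u p) • Finsupp.single p (1 : ℝ) := by
      ext q
      rw [Finsupp.finset_sum_apply]
      have h1 : ∀ p ∈ u.support, ((u p) • Finsupp.single p (1 : ℝ)) q
          = if p = q then u p else 0 := by
        intro p _
        rw [Finsupp.smul_apply, Finsupp.single_apply]
        split <;> simp
      rw [Finset.sum_congr rfl h1, Finset.sum_ite_eq' _ q _]
      split
      · rfl
      · next h => exact Finsupp.notMem_support_iff.mp h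
    have hmuluu : mul u u = ∑ p ∈ u.support, (u p) ^ 2 • E p := by
      conv_lhs => rw [hu']
      rw [map_sum]
      refine Finset.sum_congr rfl fun x hx => ?_
      rw [map_smul, map_sum, LinearMap.sum_apply,
        Finset.sum_eq_single x
          (fun p _ hp => by rw [map_smul, LinearMap.smul_apply, horth p x hp, smul_zero])
          (fun h => absurd hx h),
        map_smul, LinearMap.smul_apply, smul_smul, ← sq]
    have hexp : ∀ q, u q = ∑ p ∈ u.support, (u p) ^ 2 * E p q := by
      intro q
      conv_lhs => rw [← hidem]
      rw [hmuluu, Finsupp.finset_sum_apply]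
      exact Finset.sum_congr rfl fun p _ => by rw [Finsupp.smul_apply, smul_eq_mul]
    set Td := u.support.filter (fun p => p.1 = p.2) with hTd
    set To := u.support.filter (fun p => ¬ p.1 = p.2) with hTo
    have hsplit : ∀ f : ((𝕃 → S) × (𝕃 → S)) → ℝ,
        ∑ p ∈ u.support, f p = ∑ p ∈ Td, f p + ∑ p ∈ To, f p := by
      intro f
      rw [hTd, hTo]
      exact (Finset.sum_filter_add_sum_filter_not _ _ f).symm
    have hun : ∀ q, 0 ≤ u q := by
      intro q
      rw [hexp q]
      exact Finset.sum_nonneg fun p _ => mul_nonneg (sq_nonneg _) (hEnn p q)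
    -- off-diagonal support elements have finite discrepancy
    have hfinToff : ∀ p ∈ u.support, p.1 ≠ p.2 → ({x : 𝕃 | p.1 x ≠ p.2 x}).Finite := by
      intro p hp hd
      by_contra hD
      apply Finsupp.mem_support_iff.mp hp
      rw [hexp p]
      apply Finset.sum_eq_zero
      intro p' _
      rcases eq_or_ne p'.1 p'.2 with hd' | hd'
      · rw [hEdiag' p' hd', Finsupp.single_apply, if_neg, mul_zero]
        rintro rfl; exact hd hd'
      · by_cases hD' : ({x : 𝕃 | p'.1 x ≠ p'.2 x}).Finite
        · rw [hEcoef p' hD' p, if_neg, mul_zero]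
          rintro ⟨h1, h2⟩
          exact hD (hD'.subset (omega_diff_subset hpart h1 h2))
        · rw [hE0 p' hD']; simp
    -- diagonal parts of sums
    have hdsum : ∀ q : (𝕃 → S) × (𝕃 → S), q.1 = q.2 →
        ∑ p ∈ Td, (u p) ^ 2 * E p q = (u q) ^ 2 := by
      intro q hq
      have h1 : ∀ p ∈ Td, (u p) ^ 2 * E p q = if p = q then (u q) ^ 2 else 0 := by
        intro p hp
        have hpd := (Finset.mem_filter.mp hp).2
        rw [hEdiag' p hpd, Finsupp.single_apply]
        split
        · next h => rw [h, mul_one]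
        · rw [mul_zero]
      rw [Finset.sum_congr rfl h1, Finset.sum_ite_eq' _ q _]
      split
      · rfl
      · next h =>
        have hz : u q = 0 := by
          by_contra h0
          exact h (Finset.mem_filter.mpr ⟨Finsupp.mem_support_iff.mpr h0, hq⟩)
        rw [hz]; ring
    have hdsum0 : ∀ q : (𝕃 → S) × (𝕃 → S), q.1 ≠ q.2 →
        ∑ p ∈ Td, (u p) ^ 2 * E p q = 0 := by
      intro q hq
      apply Finset.sum_eq_zero
      intro p hp
      have hpd := (Finset.mem_filter.mp hp).2
      rw [hEdiag' p hpd, Finsupp.single_apply, if_neg, mul_zero]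
      rintro rfl; exact hq hpd
    -- the diagonal "deposits" are at most 1/4
    have hSd : ∀ ζ : 𝕃 → S,
        ∑ p ∈ To, (u p) ^ 2 * E p (ζ, ζ) = u (ζ, ζ) - (u (ζ, ζ)) ^ 2 := by
      intro ζ
      have h := hexp (ζ, ζ)
      rw [hsplit (fun p => (u p) ^ 2 * E p (ζ, ζ)), hdsum (ζ, ζ) rfl] at h
      linarith
    have hSd4 : ∀ ζ : 𝕃 → S, ∑ p ∈ To, (u p) ^ 2 * E p (ζ, ζ) ≤ 1 / 4 := by
      intro ζ
      rw [hSd ζ]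
      nlinarith [sq_nonneg (u (ζ, ζ) - 1 / 2)]
    have hoffexp : ∀ q : (𝕃 → S) × (𝕃 → S), q.1 ≠ q.2 →
        u q = ∑ p ∈ To, (u p) ^ 2 * E p q := by
      intro q hq
      have h := hexp q
      rw [hsplit (fun p => (u p) ^ 2 * E p q), hdsum0 q hq, zero_add] at h
      exact h
    -- every off-diagonal coefficient is at most 1/4
    have hoffb : ∀ q : (𝕃 → S) × (𝕃 → S), q.1 ≠ q.2 → u q ≤ 1 / 4 := by
      intro q hq
      have h2 : ∀ p ∈ To, (u p) ^ 2 * E p q ≤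
          ((u p) ^ 2 * E p (q.1, q.1) + (u p) ^ 2 * E p (q.2, q.2)) / 2 := by
        intro p hp
        have hp' := Finset.mem_filter.mp hp
        have hD := hfinToff p hp'.1 hp'.2
        by_cases hcond : (∀ Δ ∈ 𝒞, Set.EqOn q.1 p.1 Δ ∨ Set.EqOn q.1 p.2 Δ) ∧
            (∀ Δ ∈ 𝒞, Set.EqOn q.2 p.1 Δ ∨ Set.EqOn q.2 p.2 Δ)
        · rw [hEcoef p hD q, hEcoef p hD (q.1, q.1), hEcoef p hD (q.2, q.2),
            if_pos hcond, if_pos ⟨hcond.1, hcond.1⟩, if_pos ⟨hcond.2, hcond.2⟩]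
          have c1 := hpos p.1 p.2 q.1 hD hcond.1
          have c2 := hpos p.1 p.2 q.2 hD hcond.2
          nlinarith [sq_nonneg (u p), sq_nonneg (c p.1 p.2 q.1 - c p.1 p.2 q.2),
            sq_nonneg ((u p) * (c p.1 p.2 q.1 - c p.1 p.2 q.2))]
        · rw [hEcoef p hD q, if_neg hcond, mul_zero]
          have n1 := mul_nonneg (sq_nonneg (u p)) (hEnn p (q.1, q.1))
          have n2 := mul_nonneg (sq_nonneg (u p)) (hEnn p (q.2, q.2))
          linarith
      calc u q = ∑ p ∈ To, (u p) ^ 2 * E p q := hoffexp q hq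
        _ ≤ ∑ p ∈ To, ((u p) ^ 2 * E p (q.1, q.1) + (u p) ^ 2 * E p (q.2, q.2)) / 2 :=
            Finset.sum_le_sum h2
        _ = ((∑ p ∈ To, (u p) ^ 2 * E p (q.1, q.1)) +
              (∑ p ∈ To, (u p) ^ 2 * E p (q.2, q.2))) / 2 := by
            rw [← Finset.sum_add_distrib, ← Finset.sum_div]
        _ ≤ (1 / 4 + 1 / 4) / 2 := by
            have := hSd4 q.1; have := hSd4 q.2; linarith
        _ = 1 / 4 := by norm_num
    -- row sums of squares are at most 1
    have hrow : ∀ p ∈ To, ∑ q ∈ To, E p q ≤ 1 := by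
      intro p hp
      have hp' := Finset.mem_filter.mp hp
      have hD := hfinToff p hp'.1 hp'.2
      have hfin := omega_finite hpart (σ := p.1) (η := p.2) hD
      have hElem : ∀ q, E p q ≠ 0 → q ∈ hfin.toFinset ×ˢ hfin.toFinset := by
        intro q hne
        rw [hEcoef p hD q] at hne
        by_contra hmem
        apply hne
        rw [if_neg]
        intro hcond
        apply hmem
        rw [Finset.mem_product, Set.Finite.mem_toFinset, Set.Finite.mem_toFinset]
        exact hcond
      have hsumF : ∑ ζ ∈ hfin.toFinset, c p.1 p.2 ζ = 1 := by
        have h2 := hsum p.1 p.2 hD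
        rw [finsum_mem_eq_finite_toFinset_sum _ hfin] at h2
        exact h2
      calc ∑ q ∈ To, E p q
          = ∑ q ∈ To.filter (fun q => q ∈ hfin.toFinset ×ˢ hfin.toFinset), E p q :=
            (Finset.sum_filter_of_ne (fun q _ h => hElem q h)).symm
        _ ≤ ∑ q ∈ hfin.toFinset ×ˢ hfin.toFinset, E p q :=
            Finset.sum_le_sum_of_subset_of_nonneg
              (fun q hq => (Finset.mem_filter.mp hq).2) (fun q _ _ => hEnn p q)
        _ = ∑ q ∈ hfin.toFinset ×ˢ hfin.toFinset, c p.1 p.2 q.1 * c p.1 p.2 q.2 := by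
            refine Finset.sum_congr rfl fun q hq => ?_
            rw [Finset.mem_product, Set.Finite.mem_toFinset, Set.Finite.mem_toFinset] at hq
            rw [hEcoef p hD q, if_pos ⟨hq.1, hq.2⟩]
        _ = (∑ ζ ∈ hfin.toFinset, c p.1 p.2 ζ) * (∑ ζ ∈ hfin.toFinset, c p.1 p.2 ζ) := by
            rw [Finset.sum_mul_sum]
            exact Finset.sum_product _ _ _
        _ = 1 := by rw [hsumF, one_mul]
    -- the total off-diagonal mass vanishes
    have hMexp : ∑ q ∈ To, u q = ∑ p ∈ To, (u p) ^ 2 * ∑ q ∈ To, E p q := by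
      have h1 : ∀ q ∈ To, u q = ∑ p ∈ To, (u p) ^ 2 * E p q :=
        fun q hq => hoffexp q (Finset.mem_filter.mp hq).2
      rw [Finset.sum_congr rfl h1, Finset.sum_comm]
      exact Finset.sum_congr rfl fun p _ => (Finset.mul_sum _ _ _).symm
    have hM0 : (0 : ℝ) ≤ ∑ q ∈ To, u q := Finset.sum_nonneg fun q _ => hun q
    have hMle : ∑ q ∈ To, u q ≤ 1 / 4 * ∑ q ∈ To, u q := by
      calc ∑ q ∈ To, u q = ∑ p ∈ To, (u p) ^ 2 * ∑ q ∈ To, E p q := hMexp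
        _ ≤ ∑ p ∈ To, (u p) ^ 2 * 1 := Finset.sum_le_sum fun p hp =>
            mul_le_mul_of_nonneg_left (hrow p hp) (sq_nonneg _)
        _ = ∑ p ∈ To, u p * u p := Finset.sum_congr rfl fun p _ => by rw [mul_one, sq]
        _ ≤ ∑ p ∈ To, 1 / 4 * u p := Finset.sum_le_sum fun p hp =>
            mul_le_mul_of_nonneg_right (hoffb p (Finset.mem_filter.mp hp).2) (hun p)
        _ = 1 / 4 * ∑ q ∈ To, u q := (Finset.mul_sum _ _ _).symm
    have hMz : ∑ q ∈ To, u q = 0 := by linarith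
    have hToempty : To = ∅ := by
      rw [Finset.eq_empty_iff_forall_notMem]
      intro q hq
      have hz := (Finset.sum_eq_zero_iff_of_nonneg (fun q _ => hun q)).mp hMz q hq
      exact Finsupp.mem_support_iff.mp (Finset.mem_filter.mp hq).1 hz
    have hdiagall : ∀ q ∈ u.support, q.1 = q.2 := by
      intro q hq
      by_contra hd
      have hmem : q ∈ To := Finset.mem_filter.mpr ⟨hq, hd⟩
      rw [hToempty] at hmem
      exact absurd hmem (Finset.notMem_empty q)
    have hone : ∀ q ∈ u.support, u q = 1 := by
      intro q hq
      have hqd := hdiagall q hq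
      have h := hexp q
      rw [hsplit (fun p => (u p) ^ 2 * E p q), hdsum q hqd] at h
      rw [hToempty, Finset.sum_empty, add_zero] at h
      have hne := Finsupp.mem_support_iff.mp hq
      have hfac : u q * (u q - 1) = 0 := by nlinarith [h]
      rcases mul_eq_zero.mp hfac with h0 | h1
      · exact absurd h0 hne
      · linarith
    refine ⟨u.support.image Prod.fst, ?_⟩
    have hinj : ∀ q ∈ u.support, ∀ q' ∈ u.support, q.1 = q'.1 → q = q' := by
      intro q hq q' hq' h
      obtain ⟨a, b⟩ := q
      obtain ⟨a', b'⟩ := q'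
      have h1 : a = b := hdiagall _ hq
      have h2 : a' = b' := hdiagall _ hq'
      have h3 : a = a' := h
      subst h1; subst h2; subst h3; rfl
    rw [Finset.sum_image hinj]
    ext q
    rw [Finsupp.finset_sum_apply]
    have h1 : ∀ p ∈ u.support, (Finsupp.single (p.1, p.1) (1 : ℝ)) q
        = if p = q then 1 else 0 := by
      intro p hp
      have hpd := hdiagall p hp
      have hpe : ((p.1, p.1) : (𝕃 → S) × (𝕃 → S)) = p := by
        obtain ⟨a, b⟩ := p
        have : a = b := hpd
        subst this; rfl
      rw [hpe, Finsupp.single_apply]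
    rw [Finset.sum_congr rfl h1, Finset.sum_ite_eq' _ q _]
    split
    · next h => exact hone q h
    · next h => exact Finsupp.notMem_support_iff.mp h
  · rintro ⟨F, rfl⟩
    rw [map_sum]
    refine Finset.sum_congr rfl fun τ hτ => ?_
    rw [map_sum, LinearMap.sum_apply,
      Finset.sum_eq_single τ
        (fun σ _ hne => horth (σ, σ) (τ, τ) (fun h => hne (congrArg Prod.fst h)))
        (fun h => absurd hτ h)]
    exact hEdiag τ
end

section
/- The evolution algebra ℰ is isomorphic to the tensor module 𝒜 ⊗ 𝒜 equipped with the product (e_σ ⊗ e_η) * (e_{σ'} ⊗ e_{η'}) := δ_{σσ'}δ_{ηη'} (e_σ·e_η) ⊗ (e_σ·e_η), via the linear map e_{ση} ↦ e_σ ⊗ e_η. -/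
open TensorProduct

/-- The zero of the tensor module (helper instance; definitionally the zero of
the additive monoid structure on the tensor product). -/
noncomputable instance tensorZero {α : Type*} : Zero ((α →₀ ℝ) ⊗[ℝ] (α →₀ ℝ)) :=
  AddMonoid.toZero

/-- The 𝒞-evolution Gibbs algebra ℰ is isomorphic to the tensor module
𝒜 ⊗ 𝒜 of the genetic Gibbs algebra 𝒜 equipped with the product
(e_σ ⊗ e_η) * (e_σ' ⊗ e_η') = δ_{σσ'}δ_{ηη'} (e_σ·e_η) ⊗ (e_σ·e_η),
via the linear map e_{ση} ↦ e_σ ⊗ e_η. -/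
theorem evolution_gibbs_iso_tensor {S 𝕃 : Type*} [Finite S] [Countable 𝕃]
    (𝒞 : Set (Set 𝕃)) (hpart : Setoid.IsPartition 𝒞)
    (c : (𝕃 → S) → (𝕃 → S) → (𝕃 → S) → ℝ)
    -- the genetic Gibbs algebra product on 𝒜 = Ω →₀ ℝ
    (mulA : ((𝕃 → S) →₀ ℝ) →ₗ[ℝ] ((𝕃 → S) →₀ ℝ) →ₗ[ℝ] ((𝕃 → S) →₀ ℝ))
    (hmulA : ∀ σ η : 𝕃 → S, ({x : 𝕃 | σ x ≠ η x}).Finite →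
      mulA (Finsupp.single σ 1) (Finsupp.single η 1)
        = ∑ᶠ ζ ∈ {ζ : 𝕃 → S | ∀ Δ ∈ 𝒞, Set.EqOn ζ σ Δ ∨ Set.EqOn ζ η Δ},
            c σ η ζ • Finsupp.single ζ (1 : ℝ))
    (hmulA0 : ∀ σ η : 𝕃 → S, ¬ ({x : 𝕃 | σ x ≠ η x}).Finite →
      mulA (Finsupp.single σ 1) (Finsupp.single η 1) = 0)
    -- the evolution Gibbs algebra product on ℰ = Ω² →₀ ℝ
    (mulE : (((𝕃 → S) × (𝕃 → S)) →₀ ℝ) →ₗ[ℝ]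
      (((𝕃 → S) × (𝕃 → S)) →₀ ℝ) →ₗ[ℝ] (((𝕃 → S) × (𝕃 → S)) →₀ ℝ))
    (hmulE : ∀ σ η : 𝕃 → S, ({x : 𝕃 | σ x ≠ η x}).Finite →
      mulE (Finsupp.single (σ, η) 1) (Finsupp.single (σ, η) 1)
        = ∑ᶠ q ∈ ({ζ : 𝕃 → S | ∀ Δ ∈ 𝒞, Set.EqOn ζ σ Δ ∨ Set.EqOn ζ η Δ} ×ˢ
              {ζ : 𝕃 → S | ∀ Δ ∈ 𝒞, Set.EqOn ζ σ Δ ∨ Set.EqOn ζ η Δ}),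
            (c σ η q.1 * c σ η q.2) • Finsupp.single q (1 : ℝ))
    (hmulE0 : ∀ σ η : 𝕃 → S, ¬ ({x : 𝕃 | σ x ≠ η x}).Finite →
      mulE (Finsupp.single (σ, η) 1) (Finsupp.single (σ, η) 1) = 0)
    (horth : ∀ p q : (𝕃 → S) × (𝕃 → S), p ≠ q →
      mulE (Finsupp.single p 1) (Finsupp.single q 1) = 0)
    -- the product * on the tensor module 𝒜 ⊗ 𝒜
    (star : (((𝕃 → S) →₀ ℝ) ⊗[ℝ] ((𝕃 → S) →₀ ℝ)) →ₗ[ℝ]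
      (((𝕃 → S) →₀ ℝ) ⊗[ℝ] ((𝕃 → S) →₀ ℝ)) →ₗ[ℝ]
      (((𝕃 → S) →₀ ℝ) ⊗[ℝ] ((𝕃 → S) →₀ ℝ)))
    (hstar : ∀ σ η : 𝕃 → S,
      star (Finsupp.single σ (1 : ℝ) ⊗ₜ[ℝ] Finsupp.single η (1 : ℝ))
          (Finsupp.single σ (1 : ℝ) ⊗ₜ[ℝ] Finsupp.single η (1 : ℝ))
        = (mulA (Finsupp.single σ 1) (Finsupp.single η 1)) ⊗ₜ[ℝ]
            (mulA (Finsupp.single σ 1) (Finsupp.single η 1)))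
    (hstar0 : ∀ σ η σ' η' : 𝕃 → S, (σ, η) ≠ (σ', η') →
      star (Finsupp.single σ (1 : ℝ) ⊗ₜ[ℝ] Finsupp.single η (1 : ℝ))
          (Finsupp.single σ' (1 : ℝ) ⊗ₜ[ℝ] Finsupp.single η' (1 : ℝ)) = 0) :
    ∃ φ : (((𝕃 → S) × (𝕃 → S)) →₀ ℝ) ≃ₗ[ℝ]
        (((𝕃 → S) →₀ ℝ) ⊗[ℝ] ((𝕃 → S) →₀ ℝ)),
      (∀ p : (𝕃 → S) × (𝕃 → S),
        φ (Finsupp.single p 1)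
          = Finsupp.single p.1 (1 : ℝ) ⊗ₜ[ℝ] Finsupp.single p.2 (1 : ℝ)) ∧
      (∀ u v, φ (mulE u v) = star (φ u) (φ v)) := by
  set φ := (finsuppTensorFinsupp' ℝ (𝕃 → S) (𝕃 → S)).symm with hφdef
  have hφ : ∀ p : (𝕃 → S) × (𝕃 → S),
      φ (Finsupp.single p 1)
        = Finsupp.single p.1 (1 : ℝ) ⊗ₜ[ℝ] Finsupp.single p.2 (1 : ℝ) := by
    intro p
    rw [LinearEquiv.symm_apply_eq, finsuppTensorFinsupp'_single_tmul_single,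
      one_mul]
  have hzero : φ 0 = 0 := map_zero φ.toLinearMap
  have hsum : ∀ (s : Finset ((𝕃 → S) × (𝕃 → S)))
      (f : (𝕃 → S) × (𝕃 → S) → ((𝕃 → S) × (𝕃 → S)) →₀ ℝ),
      φ (∑ i ∈ s, f i) = ∑ i ∈ s, φ (f i) := fun s f => map_sum φ.toLinearMap f s
  have hsmul : ∀ (r : ℝ) (x : ((𝕃 → S) × (𝕃 → S)) →₀ ℝ),
      φ (r • x) = r • φ x := fun r x => map_smul φ.toLinearMap r x
  refine ⟨φ, hφ, ?_⟩
  -- key finiteness fact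
  have hKfin : ∀ σ η : 𝕃 → S, ({x : 𝕃 | σ x ≠ η x}).Finite →
      ({ζ : 𝕃 → S | ∀ Δ ∈ 𝒞, Set.EqOn ζ σ Δ ∨ Set.EqOn ζ η Δ}).Finite := by
    intro σ η hD
    set D := {x : 𝕃 | σ x ≠ η x} with hDdef
    have hsub : {ζ : 𝕃 → S | ∀ Δ ∈ 𝒞, Set.EqOn ζ σ Δ ∨ Set.EqOn ζ η Δ}
        ⊆ {ζ : 𝕃 → S | ∀ x ∉ D, ζ x = σ x} := by
      intro ζ hζ x hx
      obtain ⟨Δ, ⟨hΔ, hxΔ⟩, -⟩ := hpart.2 x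
      have hx' : σ x = η x := by
        by_contra h; exact hx h
      rcases hζ Δ hΔ with h | h
      · exact h hxΔ
      · rw [h hxΔ, hx']
    refine Set.Finite.subset ?_ hsub
    have : Finite ↥D := hD
    refine Set.Finite.of_finite_image (f := fun ζ (x : D) => ζ x)
      (Set.toFinite _) ?_
    intro ζ hζ ζ' hζ' h
    funext x
    by_cases hx : x ∈ D
    · exact congrFun h ⟨x, hx⟩
    · rw [hζ x hx, hζ' x hx]
  -- key on singletons
  have key : ∀ p q : (𝕃 → S) × (𝕃 → S),
      φ (mulE (Finsupp.single p 1) (Finsupp.single q 1))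
        = star (φ (Finsupp.single p 1)) (φ (Finsupp.single q 1)) := by
    intro p q
    by_cases hpq : p = q
    · subst hpq
      obtain ⟨σ, η⟩ := p
      rw [hφ (σ, η)]
      by_cases hD : ({x : 𝕃 | σ x ≠ η x}).Finite
      · rw [hmulE σ η hD, hstar σ η, hmulA σ η hD]
        set K := {ζ : 𝕃 → S | ∀ Δ ∈ 𝒞, Set.EqOn ζ σ Δ ∨ Set.EqOn ζ η Δ}
        have hK := hKfin σ η hD
        rw [finsum_mem_eq_finite_toFinset_sum _ (hK.prod hK),
          finsum_mem_eq_finite_toFinset_sum _ hK,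
          ← Set.Finite.toFinset_prod hK hK, hsum]
        rw [TensorProduct.sum_tmul]
        rw [Finset.sum_product]
        refine Finset.sum_congr rfl fun ζ hζ => ?_
        rw [TensorProduct.tmul_sum]
        refine Finset.sum_congr rfl fun ξ hξ => ?_
        rw [hsmul, hφ (ζ, ξ)]
        rw [TensorProduct.tmul_smul, TensorProduct.smul_tmul',
          TensorProduct.smul_tmul', smul_smul, mul_comm (c σ η ξ)]
      · rw [hmulE0 σ η hD, hstar σ η, hmulA0 σ η hD, hzero,
          TensorProduct.zero_tmul]
    · rw [horth p q hpq, hzero, hφ p, hφ q,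
        hstar0 p.1 p.2 q.1 q.2 (by simpa using hpq)]
  intro u v
  have : (mulE.compr₂ φ.toLinearMap)
      = ((star.comp φ.toLinearMap).compl₂ φ.toLinearMap) := by
    refine Finsupp.lhom_ext' fun p => LinearMap.ext_ring ?_
    refine Finsupp.lhom_ext' fun q => LinearMap.ext_ring ?_
    simpa using key p q
  exact LinearMap.congr_fun (LinearMap.congr_fun this u) v
end

section
/- (Atomic clusters, evolution coefficients determine equivalence.) Suppose 𝒞 = 𝒞_⊙ is the partition of 𝕃 into singletons, and suppose Φ, Ψ are admissible potentials such that for all ζ, η with 𝔇_{ζη} finite and all σ ∈ Ω_{ζη}: h^Φ_{𝔇_{ζη}}(σ)/Σ_{ξ∈Ω_{ζη}} h^Φ_{𝔇_{ζη}}(ξ) = h^Ψ_{𝔇_{ζη}}(σ)/Σ_{ξ∈Ω_{ζη}} h^Ψ_{𝔇_{ζη}}(ξ), where h^Φ_Λ = exp(−H^Φ_Λ). Then for every finite Λ and every ζ ∈ Ω, the ratio h_Λ^Φ(ξζ_{Λᶜ}) / h_Λ^Ψ(ξζ_{Λᶜ}) is independent of ξ ∈ S^Λ; i.e. H_Λ^Φ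 − H_Λ^Ψ depends only on the configuration outside Λ, so Φ and Ψ are equivalent. -/
/-- The Hamiltonian in the finite volume Λ for the interaction potential Φ:
H_Λ^Φ(σ) = Σ_{A finite, A ∩ Λ ≠ ∅} Φ_A(σ). -/
noncomputable def Ham {S 𝕃 : Type*} [DecidableEq 𝕃]
    (Φ : Finset 𝕃 → (𝕃 → S) → ℝ) (Λ : Finset 𝕃) (σ : 𝕃 → S) : ℝ :=
  ∑' A : Finset 𝕃, if (A ∩ Λ).Nonempty then Φ A σ else 0

lemma ham_sub_indep {S 𝕃 : Type*} [DecidableEq 𝕃]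
    (Φ : Finset 𝕃 → (𝕃 → S) → ℝ)
    (hloc : ∀ (A : Finset 𝕃) (σ τ : 𝕃 → S), Set.EqOn σ τ ↑A → Φ A σ = Φ A τ)
    (hadm : ∀ (Λ : Finset 𝕃) (σ : 𝕃 → S),
      Summable (fun A : Finset 𝕃 => if (A ∩ Λ).Nonempty then Φ A σ else 0))
    (Λ D : Finset 𝕃) (hD : D ⊆ Λ) (σ τ : 𝕃 → S)
    (hστ : ∀ x, x ∉ D → σ x = τ x) :
    Ham Φ Λ σ - Ham Φ D σ = Ham Φ Λ τ - Ham Φ D τ := by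
  unfold Ham
  rw [← Summable.tsum_sub (hadm Λ σ) (hadm D σ), ← Summable.tsum_sub (hadm Λ τ) (hadm D τ)]
  congr 1
  funext A
  by_cases h1 : (A ∩ Λ).Nonempty
  · by_cases h2 : (A ∩ D).Nonempty
    · simp [h1, h2]
    · have : Φ A σ = Φ A τ := hloc A σ τ (fun x hx =>
        hστ x (fun hxD => h2 ⟨x, Finset.mem_inter.2 ⟨hx, hxD⟩⟩))
      simp [h1, h2, this]
  · have h2 : ¬(A ∩ D).Nonempty := fun h =>
      h1 (h.mono (Finset.inter_subset_inter le_rfl hD))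
    simp [h1, h2]

lemma ratio_cross {a b c d A B : ℝ} (hA : 0 < A) (hB : 0 < B)
    (h1 : a / A = c / B) (h2 : b / A = d / B) : a * d = b * c := by
  rw [div_eq_div_iff hA.ne' hB.ne'] at h1 h2
  have h3 : a * d * (B * A) = b * c * (B * A) := by
    calc a * d * (B * A) = (a * B) * (d * A) := by ring
      _ = (c * A) * (b * B) := by rw [h1, h2]
      _ = b * c * (B * A) := by ring
  exact mul_right_cancel₀ (by positivity) h3

/-- Atomic clusters: if the normalized Boltzmann weights of two admissible
potentials Φ and Ψ agree on every offspring set (offspring mix the two parents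
site by site), then H_Λ^Φ − H_Λ^Ψ depends only on the configuration outside Λ,
i.e. Φ and Ψ are equivalent potentials. -/
theorem atomic_clusters_weights_determine_equivalence {S 𝕃 : Type*} [Finite S]
    [Countable 𝕃] [DecidableEq 𝕃]
    (Φ Ψ : Finset 𝕃 → (𝕃 → S) → ℝ)
    (hΦloc : ∀ (A : Finset 𝕃) (σ τ : 𝕃 → S), Set.EqOn σ τ ↑A → Φ A σ = Φ A τ)
    (hΨloc : ∀ (A : Finset 𝕃) (σ τ : 𝕃 → S), Set.EqOn σ τ ↑A → Ψ A σ = Ψ A τ)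
    (hΦadm : ∀ (Λ : Finset 𝕃) (σ : 𝕃 → S),
      Summable (fun A : Finset 𝕃 => if (A ∩ Λ).Nonempty then Φ A σ else 0))
    (hΨadm : ∀ (Λ : Finset 𝕃) (σ : 𝕃 → S),
      Summable (fun A : Finset 𝕃 => if (A ∩ Λ).Nonempty then Ψ A σ else 0))
    (hweights : ∀ (ζ η : 𝕃 → S) (hfin : ({x : 𝕃 | ζ x ≠ η x}).Finite),
      ∀ σ ∈ {ξ : 𝕃 → S | ∀ x : 𝕃, ξ x = ζ x ∨ ξ x = η x},
        Real.exp (-Ham Φ hfin.toFinset σ)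
            / ∑ᶠ ξ ∈ {ξ : 𝕃 → S | ∀ x : 𝕃, ξ x = ζ x ∨ ξ x = η x},
                Real.exp (-Ham Φ hfin.toFinset ξ)
          = Real.exp (-Ham Ψ hfin.toFinset σ)
              / ∑ᶠ ξ ∈ {ξ : 𝕃 → S | ∀ x : 𝕃, ξ x = ζ x ∨ ξ x = η x},
                  Real.exp (-Ham Ψ hfin.toFinset ξ)) :
    ∀ (Λ : Finset 𝕃) (σ τ : 𝕃 → S), Set.EqOn σ τ (↑Λ)ᶜ →
      Ham Φ Λ σ - Ham Ψ Λ σ = Ham Φ Λ τ - Ham Ψ Λ τ := by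
  intro Λ σ τ hστ
  have hfin : ({x : 𝕃 | σ x ≠ τ x}).Finite := by
    apply Set.Finite.subset Λ.finite_toSet
    intro x hx
    by_contra hxΛ
    exact hx (hστ hxΛ)
  have hDΛ : hfin.toFinset ⊆ Λ := by
    intro x hx
    rw [Set.Finite.mem_toFinset] at hx
    by_contra h; exact hx (hστ h)
  have hoff : ∀ x, x ∉ hfin.toFinset → σ x = τ x := by
    intro x hx; rw [Set.Finite.mem_toFinset] at hx; simpa using hx
  have hσΩ : σ ∈ {ξ : 𝕃 → S | ∀ x : 𝕃, ξ x = σ x ∨ ξ x = τ x} :=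
    fun x => Or.inl rfl
  have hτΩ : τ ∈ {ξ : 𝕃 → S | ∀ x : 𝕃, ξ x = σ x ∨ ξ x = τ x} :=
    fun x => Or.inr rfl
  have hΩfin : ({ξ : 𝕃 → S | ∀ x : 𝕃, ξ x = σ x ∨ ξ x = τ x}).Finite := by
    have hinj : Set.InjOn (fun ξ : 𝕃 → S => fun x : hfin.toFinset => ξ x)
        {ξ : 𝕃 → S | ∀ x : 𝕃, ξ x = σ x ∨ ξ x = τ x} := by
      intro ξ1 h1 ξ2 h2 he
      funext x
      by_cases hx : x ∈ hfin.toFinset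
      · exact congrFun he ⟨x, hx⟩
      · have hστx : σ x = τ x := hoff x hx
        rcases h1 x with e1 | e1 <;> rcases h2 x with e2 | e2 <;>
          simp [e1, e2, hστx]
    exact Set.Finite.of_finite_image (Set.toFinite _) hinj
  have hsum : ∀ (Θ : Finset 𝕃 → (𝕃 → S) → ℝ),
      0 < ∑ᶠ ξ ∈ {ξ : 𝕃 → S | ∀ x : 𝕃, ξ x = σ x ∨ ξ x = τ x},
        Real.exp (-Ham Θ hfin.toFinset ξ) := by
    intro Θ
    rw [finsum_mem_eq_finite_toFinset_sum _ hΩfin]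
    exact Finset.sum_pos (fun _ _ => Real.exp_pos _)
      ⟨σ, hΩfin.mem_toFinset.2 hσΩ⟩
  have key : Ham Φ hfin.toFinset σ - Ham Ψ hfin.toFinset σ
      = Ham Φ hfin.toFinset τ - Ham Ψ hfin.toFinset τ := by
    have e1 := hweights σ τ hfin σ hσΩ
    have e2 := hweights σ τ hfin τ hτΩ
    have hcross := ratio_cross (hsum Φ) (hsum Ψ) e1 e2
    rw [← Real.exp_add, ← Real.exp_add] at hcross
    have := Real.exp_injective hcross
    linarith
  have hΦeq := ham_sub_indep Φ hΦloc hΦadm Λ hfin.toFinset hDΛ σ τ hoff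
  have hΨeq := ham_sub_indep Ψ hΨloc hΨadm Λ hfin.toFinset hDΛ σ τ hoff
  linarith
end
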